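/- Let k be a field, S = k[x,y], and R = k + xS. Let m₀ = xS, which is a maximal ideal of R. Then the localization R_{m₀} is not noetherian. -/

import Mathlib

open MvPolynomial

section Aux

variable {k : Type*} [Field k]

/-- The set of polynomials all of whose monomials of `x`-degree `0` other than the
constant term vanish, i.e. `k + x·k[x,y]`, as a subalgebra. -/
noncomputable def auxT (k : Type*) [Field k] : Subalgebra k (MvPolynomial (Fin 2) k) where
  carrier := {f | ∀ d : Fin 2 →₀ ℕ, d 0 = 0 → d ≠ 0 → coeff d f = 0}
  add_mem' {f g} hf hg d hd0 hdne := by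
    simp [coeff_add, hf d hd0 hdne, hg d hd0 hdne]
  mul_mem' {f g} hf hg d hd0 hdne := by
    rw [coeff_mul]
    apply Finset.sum_eq_zero
    rintro ⟨d1, d2⟩ hmem
    rw [Finset.HasAntidiagonal.mem_antidiagonal] at hmem
    have h0 : d1 0 = 0 ∧ d2 0 = 0 := by
      have : d1 0 + d2 0 = 0 := by
        rw [← Finsupp.add_apply, hmem, hd0]
      omega
    by_cases h1 : d1 = 0
    · have h2 : d2 = d := by rw [← hmem, h1, zero_add]
      simp [h2, hg d hd0 hdne]
    · simp [hf d1 h0.1 h1]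
  algebraMap_mem' r := by
    intro d hd0 hdne
    rw [MvPolynomial.algebraMap_eq, coeff_C, if_neg (fun h => hdne h.symm)]

theorem gen_mem_auxT (m : ℕ) : (X 0 * X 1 ^ m : MvPolynomial (Fin 2) k) ∈ auxT k := by
  intro d hd0 _
  rw [X_pow_eq_monomial, X, monomial_mul, one_mul, coeff_monomial]
  rw [if_neg]
  intro h
  have := congrArg (fun e : Fin 2 →₀ ℕ => e 0) h
  simp [hd0] at this

theorem adjoin_le_auxT :
    Algebra.adjoin k {f : MvPolynomial (Fin 2) k | ∃ m : ℕ, f = X 0 * X 1 ^ m} ≤ auxT k := by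
  apply Algebra.adjoin_le
  rintro f ⟨m, rfl⟩
  exact gen_mem_auxT m

/-- `X 0` divides `f` iff all coefficients with `x`-degree `0` vanish. -/
theorem X0_dvd_iff {f : MvPolynomial (Fin 2) k} :
    (X 0 : MvPolynomial (Fin 2) k) ∣ f ↔ ∀ d : Fin 2 →₀ ℕ, d 0 = 0 → coeff d f = 0 := by
  constructor
  · rintro ⟨g, rfl⟩ d hd0
    rw [coeff_X_mul']
    rw [if_neg]
    simp [Finsupp.mem_support_iff, hd0]
  · intro h
    rw [X_dvd_iff_modMonomial_eq_zero]
    ext d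
    by_cases hle : Finsupp.single (0 : Fin 2) 1 ≤ d
    · rw [coeff_modMonomial_of_le _ hle, coeff_zero]
    · rw [coeff_modMonomial_of_not_le _ hle, coeff_zero]
      apply h
      rw [Finsupp.single_le_iff] at hle
      omega

end Aux

set_option maxHeartbeats 1000000 in
set_option synthInstance.maxHeartbeats 200000 in
/-- For `S = k[x,y]`, `R = k + xS`, and `m₀ = xS` (the ideal of `R` of
elements lying in `xS`), `m₀` is a maximal ideal of `R`, and the localization `R_{m₀}`
is not noetherian. -/
theorem stmt_3 (k : Type*) [Field k]
    (R : Subalgebra k (MvPolynomial (Fin 2) k))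
    (hR : R = Algebra.adjoin k {f : MvPolynomial (Fin 2) k | ∃ m : ℕ, f = X 0 * X 1 ^ m})
    (m₀ : Ideal R)
    (hm₀ : m₀ = Ideal.comap R.val (Ideal.span {(X 0 : MvPolynomial (Fin 2) k)})) :
    m₀.IsMaximal ∧
      ∀ (hp : m₀.IsPrime), ¬ IsNoetherianRing (Localization (@Ideal.primeCompl _ _ m₀ hp)) := by
  -- Every element of `R` has vanishing non-constant coefficients of `x`-degree 0.
  have hA : ∀ r : R, ∀ d : Fin 2 →₀ ℕ, d 0 = 0 → d ≠ 0 → coeff d (r : MvPolynomial (Fin 2) k) = 0 := by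
    intro r d hd0 hdne
    have : (r : MvPolynomial (Fin 2) k) ∈ auxT k := adjoin_le_auxT (hR ▸ r.2)
    exact this d hd0 hdne
  -- membership in m₀
  have hmem_m₀ : ∀ r : R, r ∈ m₀ ↔ coeff 0 (r : MvPolynomial (Fin 2) k) = 0 := by
    intro r
    rw [hm₀, Ideal.mem_comap, Ideal.mem_span_singleton, X0_dvd_iff]
    constructor
    · intro h; exact h 0 rfl
    · intro h d hd0
      by_cases hd : d = 0
      · rw [hd]; exact h
      · exact hA r d hd0 hd
  constructor
  · -- maximality via kernel of "constant coefficient" ring hom to k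
    have hker : m₀ = RingHom.ker ((constantCoeff : MvPolynomial (Fin 2) k →+* k).comp
        (R.val : R →+* MvPolynomial (Fin 2) k)) := by
      ext r
      rw [hmem_m₀, RingHom.mem_ker]
      simp [constantCoeff_eq]
    rw [hker]
    apply RingHom.ker_isMaximal_of_surjective
    intro c
    refine ⟨algebraMap k R c, ?_⟩
    simp [Subalgebra.algebraMap_eq]
  · intro hp hNoeth
    haveI := hp
    set L := Localization m₀.primeCompl
    -- the ascending chain
    set I : ℕ → Ideal R := fun n =>
      Ideal.span {r : R | ∃ j ≤ n, (r : MvPolynomial (Fin 2) k) = X 0 * X 1 ^ j} with hI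
    have hXmem : ∀ j : ℕ, (X 0 * X 1 ^ j : MvPolynomial (Fin 2) k) ∈ R := by
      intro j
      rw [hR]
      exact Algebra.subset_adjoin ⟨j, rfl⟩
    -- key coefficient property of I n
    have hkey : ∀ n : ℕ, ∀ i ∈ I n,
        (∀ d : Fin 2 →₀ ℕ, d 0 = 0 → coeff d (i : MvPolynomial (Fin 2) k) = 0) ∧
        (∀ m, n < m →
          coeff (Finsupp.single 0 1 + Finsupp.single 1 m) (i : MvPolynomial (Fin 2) k) = 0) := by
      intro n i hi
      induction hi using Submodule.span_induction with
      | mem r hr =>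
        obtain ⟨j, hj, hrj⟩ := hr
        constructor
        · intro d hd0
          rw [hrj, X_pow_eq_monomial, X, monomial_mul, one_mul, coeff_monomial, if_neg]
          intro h
          have := congrArg (fun e : Fin 2 →₀ ℕ => e 0) h
          simp [hd0] at this
        · intro m hm
          rw [hrj, X_pow_eq_monomial, X, monomial_mul, one_mul, coeff_monomial, if_neg]
          intro h
          have := congrArg (fun e : Fin 2 →₀ ℕ => e 1) h
          simp at this
          omega
      | zero => simp
      | add x y hx hy ihx ihy =>
        refine ⟨fun d hd0 => ?_, fun m hm => ?_⟩
        · push_cast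
          rw [coeff_add, ihx.1 d hd0, ihy.1 d hd0, add_zero]
        · push_cast
          rw [coeff_add, ihx.2 m hm, ihy.2 m hm, add_zero]
      | smul a x hx ih =>
        have hcoe : ((a • x : R) : MvPolynomial (Fin 2) k)
            = (a : MvPolynomial (Fin 2) k) * (x : MvPolynomial (Fin 2) k) := rfl
        constructor
        · intro d hd0
          rw [hcoe, coeff_mul]
          apply Finset.sum_eq_zero
          rintro ⟨d1, d2⟩ hmem
          rw [Finset.HasAntidiagonal.mem_antidiagonal] at hmem
          have h2 : d2 0 = 0 := by
            have : d1 0 + d2 0 = 0 := by rw [← Finsupp.add_apply, hmem, hd0]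
            omega
          simp [ih.1 d2 h2]
        · intro m hm
          rw [hcoe, coeff_mul]
          apply Finset.sum_eq_zero
          rintro ⟨d1, d2⟩ hmem
          rw [Finset.HasAntidiagonal.mem_antidiagonal] at hmem
          by_cases h2 : d2 0 = 0
          · simp [ih.1 d2 h2]
          · have h1 : d1 0 = 0 := by
              have h := congrArg (fun e : Fin 2 →₀ ℕ => e 0) hmem
              simp [Finsupp.add_apply] at h
              omega
            by_cases h10 : d1 = 0
            · have : d2 = Finsupp.single (0 : Fin 2) 1 + Finsupp.single 1 m := by
                rw [← hmem, h10, zero_add]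
              simp [this, ih.2 m hm]
            · simp [hA a d1 h1 h10]

    -- I is monotone, hence so is the chain of mapped ideals in L
    have hImono : Monotone I := by
      intro a b hab
      apply Ideal.span_mono
      rintro r ⟨j, hj, hrj⟩
      exact ⟨j, le_trans hj hab, hrj⟩
    set J : ℕ →o Ideal L :=
      ⟨fun n => (I n).map (algebraMap R L), fun a b hab => Ideal.map_mono (hImono hab)⟩ with hJ
    obtain ⟨n, hn⟩ := monotone_stabilizes_iff_noetherian.mpr hNoeth J
    have hstable : J n = J (n + 1) := hn (n + 1) (Nat.le_succ n)
    -- the element x·y^(n+1)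
    set e : R := ⟨X 0 * X 1 ^ (n + 1), hXmem (n + 1)⟩ with he
    have hin : algebraMap R L e ∈ J (n + 1) := by
      apply Ideal.mem_map_of_mem
      exact Ideal.subset_span ⟨n + 1, le_refl _, rfl⟩
    rw [← hstable] at hin
    -- derive the contradiction
    rw [hJ] at hin
    change algebraMap R L e ∈ (I n).map (algebraMap R L) at hin
    rw [IsLocalization.mem_map_algebraMap_iff m₀.primeCompl L] at hin
    obtain ⟨⟨i, s⟩, hsi⟩ := hin
    rw [← map_mul] at hsi
    have hinj : Function.Injective (algebraMap R L) :=
      IsLocalization.injective L m₀.primeCompl_le_nonZeroDivisors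
    have heq : e * (s : R) = (i : R) := hinj hsi
    -- coefficient of x * y^(n+1) in i is zero
    have hz := (hkey n i i.2).2 (n + 1) (Nat.lt_succ_self n)
    rw [← heq] at hz
    have hcoe : ((e * (s : R) : R) : MvPolynomial (Fin 2) k)
        = (X 0 * X 1 ^ (n + 1)) * ((s : R) : MvPolynomial (Fin 2) k) := by
      push_cast [he]
      ring
    rw [hcoe] at hz
    rw [mul_comm, X_pow_eq_monomial, X, monomial_mul, one_mul, coeff_mul_monomial'] at hz
    rw [if_pos le_rfl, tsub_self, mul_one] at hz
    -- but the constant coefficient of s is nonzero since s ∉ m₀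
    have hs : (s : R) ∉ m₀ := s.2
    rw [hmem_m₀] at hs
    exact hs hz
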